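/- (Theorem 2.1, part 3) Let the sequences {x_k^t}, {x_0^t}, {y_k^t} be generated by the flexible ADMM (Algorithm 2) for the consensus problem under the period-T essentially cyclic rule, suppose Assumptions A1, A2, A3 hold, and assume additionally that X is compact. Let Z* denote the set of stationary tuples ({x̂_k}, x̂_0, ŷ) for the reformulated consensus problem, i.e. those satisfying ∇g_k(x̂_k) + ŷ_k = 0 for all k, x̂_0 minimizes x ↦ h(x) + Σ_k ⟨ŷ_k, x̂_k − x⟩ over X, and x̂_k = x̂_0 for all k. Then Z* is nonempty, the sequence ({x_k^t}, x_0^t, y^t) is bounded, and lim_{t→∞} dist(({x_k^t}, x_0^t, y^t), Z*) = 0, where dist(z, Z*) := inf_{ẑ ∈ Z*} ‖z − ẑ‖. -/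

import Mathlib

open Filter
open scoped RealInnerProductSpace BigOperators
set_option linter.unusedSectionVars false
set_option maxHeartbeats 1000000

section Aux
variable {E : Type*} [NormedAddCommGroup E] [InnerProductSpace ℝ E] [CompleteSpace E]


/-- limit helper -/
lemma le_of_forall_Ioo {b c d : ℝ} (H : ∀ a : ℝ, a ∈ Set.Ioo (0:ℝ) 1 → b ≤ c + a * d) :
    b ≤ c := by
  have h1 : Tendsto (fun a : ℝ => c + a * d) (nhdsWithin 0 (Set.Ioi 0)) (nhds c) := by
    have hc : Continuous fun a : ℝ => c + a * d := by continuity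
    have := (hc.tendsto 0).mono_left (nhdsWithin_le_nhds (s := Set.Ioi (0:ℝ)))
    simpa using this
  have h2 : ∀ᶠ a in nhdsWithin (0:ℝ) (Set.Ioi 0), b ≤ c + a * d := by
    filter_upwards [Ioo_mem_nhdsGT_of_mem (by constructor <;> norm_num :
      (0:ℝ) ∈ Set.Ico (0:ℝ) 1)] with a ha using H a ha
  exact ge_of_tendsto h1 h2

/-- quadratic growth at a constrained minimizer of a strongly convex function -/
lemma strong_growth {f : E → ℝ} {m : ℝ} {s : Set E} (hf : StrongConvexOn s m f)
    {xs z : E} (hxs : xs ∈ s) (hz : z ∈ s) (hmin : ∀ w ∈ s, f xs ≤ f w) :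
    f xs + m / 2 * ‖z - xs‖ ^ 2 ≤ f z := by
  set q : ℝ := m / 2 * ‖z - xs‖ ^ 2 with hq
  have key : ∀ a : ℝ, a ∈ Set.Ioo (0:ℝ) 1 → f xs + q ≤ f z + a * q := by
    intro a ha
    have hb0 : (0:ℝ) ≤ 1 - a := by linarith [ha.2]
    have hab : a + (1 - a) = 1 := by ring
    have hmem : a • z + (1 - a) • xs ∈ s := hf.1 hz hxs ha.1.le hb0 hab
    have h2 := hf.2 hz hxs ha.1.le hb0 hab
    have h3 := hmin _ hmem
    simp only [smul_eq_mul] at h2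
    rw [hq]
    nlinarith [ha.1, h2, h3]
  exact le_of_forall_Ioo key



lemma lipschitz_continuous {g' : E → E} {L : ℝ} (hL : 0 ≤ L)
    (hLip : ∀ u v, ‖g' u - g' v‖ ≤ L * ‖u - v‖) : Continuous g' := by
  have : LipschitzWith (Real.toNNReal L) g' := by
    apply LipschitzWith.of_dist_le_mul
    intro u v
    rw [dist_eq_norm, dist_eq_norm]
    calc ‖g' u - g' v‖ ≤ L * ‖u - v‖ := hLip u v
    _ = (Real.toNNReal L : ℝ) * ‖u - v‖ := by rw [Real.coe_toNNReal L hL]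
  exact this.continuous

/-- descent lemma -/
lemma descent_lemma {g : E → ℝ} {g' : E → E} (hgrad : ∀ z, HasGradientAt g (g' z) z)
    {L : ℝ} (hL : 0 < L) (hLip : ∀ u v, ‖g' u - g' v‖ ≤ L * ‖u - v‖) (u v : E) :
    g v ≤ g u + ⟪g' u, v - u⟫ + L / 2 * ‖v - u‖ ^ 2 := by
  set d : E := v - u with hd
  have hline : ∀ s : ℝ, HasDerivAt (fun r : ℝ => u + r • d) d s := by
    intro s
    simpa using ((hasDerivAt_id s).smul_const d).const_add u
  have hφ : ∀ s : ℝ, HasDerivAt (fun r : ℝ => g (u + r • d)) ⟪g' (u + s • d), d⟫ s := by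
    intro s
    have h1 := (hgrad (u + s • d)).hasFDerivAt.comp_hasDerivAt s (hline s)
    simpa [InnerProductSpace.toDual_apply_apply, Function.comp_def] using h1
  have hg'c : Continuous g' := lipschitz_continuous hL.le hLip
  have hcont : Continuous fun s : ℝ => ⟪g' (u + s • d), d⟫ := by
    apply Continuous.inner
    · exact hg'c.comp (by continuity)
    · exact continuous_const
  have hint : IntervalIntegrable (fun s : ℝ => ⟪g' (u + s • d), d⟫)
      MeasureTheory.volume 0 1 := hcont.intervalIntegrable 0 1
  have hftc : ∫ s in (0:ℝ)..1, ⟪g' (u + s • d), d⟫ =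
      g (u + (1:ℝ) • d) - g (u + (0:ℝ) • d) := by
    exact intervalIntegral.integral_eq_sub_of_hasDerivAt
      (fun s _ => hφ s) hint
  have hval : ∫ s in (0:ℝ)..1, ⟪g' (u + s • d), d⟫ = g v - g u := by
    rw [hftc]; simp [hd]
  have hmono : ∫ s in (0:ℝ)..1, ⟪g' (u + s • d), d⟫ ≤
      ∫ s in (0:ℝ)..1, (⟪g' u, d⟫ + L * s * ‖d‖ ^ 2) := by
    apply intervalIntegral.integral_mono_on (by norm_num) hint
    · apply (Continuous.intervalIntegrable (by continuity))
    · intro s hs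
      have h1 : ⟪g' (u + s • d), d⟫ - ⟪g' u, d⟫ = ⟪g' (u + s • d) - g' u, d⟫ := by
        rw [inner_sub_left]
      have h2 : ⟪g' (u + s • d) - g' u, d⟫ ≤ ‖g' (u + s • d) - g' u‖ * ‖d‖ :=
        real_inner_le_norm _ _
      have h3 : ‖g' (u + s • d) - g' u‖ ≤ L * ‖s • d‖ := by
        simpa using hLip (u + s • d) u
      have h4 : ‖s • d‖ = s * ‖d‖ := by
        rw [norm_smul, Real.norm_eq_abs, abs_of_nonneg hs.1]
      have h5 : ‖g' (u + s • d) - g' u‖ * ‖d‖ ≤ L * s * ‖d‖ ^ 2 := by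
        rw [h4] at h3
        nlinarith [norm_nonneg d]
      linarith
  have hrhs : ∫ s in (0:ℝ)..1, (⟪g' u, d⟫ + L * s * ‖d‖ ^ 2) =
      ⟪g' u, d⟫ + L / 2 * ‖d‖ ^ 2 := by
    rw [intervalIntegral.integral_add (by apply Continuous.intervalIntegrable; continuity)
      (by apply Continuous.intervalIntegrable; continuity)]
    simp only [intervalIntegral.integral_const, smul_eq_mul]
    have : ∫ s in (0:ℝ)..1, L * s * ‖d‖ ^ 2 = L / 2 * ‖d‖ ^ 2 := by
      have h1 : ∀ s : ℝ, L * s * ‖d‖ ^ 2 = (L * ‖d‖ ^ 2) * s := by intro s; ring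
      simp only [h1]
      rw [intervalIntegral.integral_const_mul, integral_id]
      ring
    rw [this]; ring
  have := hmono
  rw [hval, hrhs] at this
  linarith



/-- gradient of the per-block objective -/
lemma gradPhi {g : E → ℝ} {g' : E → E} (hg : ∀ z, HasGradientAt g (g' z) z)
    (yv x0v : E) (ρv : ℝ) (z : E) :
    HasGradientAt (fun w => g w + ⟪yv, w - x0v⟫ + ρv / 2 * ‖w - x0v‖ ^ 2)
      (g' z + (yv + ρv • (z - x0v))) z := by
  rw [hasGradientAt_iff_hasFDerivAt]
  have h1 : HasFDerivAt g (InnerProductSpace.toDual ℝ E (g' z)) z := (hg z).hasFDerivAt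
  have h2 : HasFDerivAt (fun w : E => ⟪yv, w - x0v⟫)
      (InnerProductSpace.toDual ℝ E yv) z := by
    have : (fun w : E => ⟪yv, w - x0v⟫) =
        fun w : E => (InnerProductSpace.toDual ℝ E yv) w - ⟪yv, x0v⟫ := by
      funext w; simp [inner_sub_right]
    rw [this]
    exact (InnerProductSpace.toDual ℝ E yv).hasFDerivAt.sub_const _
  have h3 : HasFDerivAt (fun w : E => ρv / 2 * ‖w - x0v‖ ^ 2)
      (InnerProductSpace.toDual ℝ E (ρv • (z - x0v))) z := by
    have hid : HasFDerivAt (fun w : E => w - x0v) (ContinuousLinearMap.id ℝ E) z :=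
      (hasFDerivAt_id z).sub_const x0v
    have hin := (hid.inner ℝ hid).const_mul (ρv / 2)
    have heq : (fun w : E => ρv / 2 * ⟪w - x0v, w - x0v⟫) =
        fun w : E => ρv / 2 * ‖w - x0v‖ ^ 2 := by
      funext w; rw [real_inner_self_eq_norm_sq]
    rw [heq] at hin
    refine hin.congr_fderiv ?_
    ext w
    simp only [ContinuousLinearMap.coe_comp', Function.comp_apply,
      ContinuousLinearMap.smul_apply, ContinuousLinearMap.prod_apply,
      ContinuousLinearMap.coe_id', id_eq, fderivInnerCLM_apply,
      InnerProductSpace.toDual_apply_apply, real_inner_smul_left, smul_eq_mul]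
    rw [inner_sub_left, inner_sub_right, real_inner_comm w z, real_inner_comm w x0v]
    ring
  have := (h1.add h2).add h3
  refine this.congr_fderiv ?_
  simp [map_add, map_smul, add_assoc]

/-- first-order condition at a global minimizer -/
lemma foc_zero {φ : E → ℝ} {G xm : E} (hgrad : HasGradientAt φ G xm)
    (hmin : ∀ z, φ xm ≤ φ z) : G = 0 := by
  have hloc : IsLocalMin φ xm := Filter.Eventually.of_forall fun z => hmin z
  have := hloc.hasFDerivAt_eq_zero hgrad.hasFDerivAt
  have h0 : InnerProductSpace.toDual ℝ E G = InnerProductSpace.toDual ℝ E 0 := by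
    rw [this, map_zero]
  exact (InnerProductSpace.toDual ℝ E).injective h0

/-- adding an affine function preserves strong convexity -/
lemma strongConvexOn_add_affine {f : E → ℝ} {m : ℝ} {s : Set E}
    (hf : StrongConvexOn s m f) (v : E) (c : ℝ) :
    StrongConvexOn s m (fun w => f w + (⟪v, w⟫ + c)) := by
  refine ⟨hf.1, fun p hp q hq a b ha hb hab => ?_⟩
  have h := hf.2 hp hq ha hb hab
  simp only [smul_eq_mul] at h ⊢
  have hlin : ⟪v, a • p + b • q⟫ = a * ⟪v, p⟫ + b * ⟪v, q⟫ := by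
    rw [inner_add_right, real_inner_smul_right, real_inner_smul_right]
  rw [hlin]
  have hc : a * c + b * c = c := by
    calc a * c + b * c = (a + b) * c := by ring
    _ = c := by rw [hab, one_mul]
  linarith [h, hc]



lemma convexOn_inner_add_const (v : E) (c : ℝ) :
    ConvexOn ℝ Set.univ (fun w : E => ⟪v, w⟫ + c) := by
  refine ⟨convex_univ, fun p _ q _ a b ha hb hab => ?_⟩
  simp only [smul_eq_mul, inner_add_right, real_inner_smul_right]
  have : a * c + b * c = c := by
    calc a * c + b * c = (a + b) * c := by ring
    _ = c := by rw [hab, one_mul]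
  linarith

lemma strongConvexOn_convex_add_quad {h : E → ℝ} (hconv : ConvexOn ℝ Set.univ h)
    (v : E) (c σ : ℝ) :
    StrongConvexOn Set.univ σ (fun w : E => h w + ⟪v, w⟫ + σ / 2 * ‖w‖ ^ 2 + c) := by
  rw [strongConvexOn_iff_convex]
  have heq : (fun w : E => h w + ⟪v, w⟫ + σ / 2 * ‖w‖ ^ 2 + c - σ / 2 * ‖w‖ ^ 2)
      = fun w : E => h w + (⟪v, w⟫ + c) := by funext w; ring
  rw [heq]
  exact hconv.add (convexOn_inner_add_const v c)

/-- strong convexity of the block objective, from A2 -/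
lemma phi_strongConvex {g : E → ℝ} {ρv γv : ℝ}
    (hst : StrongConvexOn Set.univ γv (fun z : E => g z + ρv / 2 * ‖z‖ ^ 2))
    (yv x0v : E) :
    StrongConvexOn Set.univ γv
      (fun z : E => g z + ⟪yv, z - x0v⟫ + ρv / 2 * ‖z - x0v‖ ^ 2) := by
  have heq : (fun z : E => g z + ⟪yv, z - x0v⟫ + ρv / 2 * ‖z - x0v‖ ^ 2)
      = fun z : E => (g z + ρv / 2 * ‖z‖ ^ 2)
          + (⟪yv - ρv • x0v, z⟫ + (ρv / 2 * ‖x0v‖ ^ 2 - ⟪yv, x0v⟫)) := by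
    funext z
    rw [@norm_sub_sq_real E, inner_sub_right, inner_sub_left, real_inner_smul_left,
      real_inner_comm x0v z]
    ring
  rw [heq]
  exact strongConvexOn_add_affine hst _ _

/-- gap lemma : iterate differences tending to zero kill bounded-gap differences -/
lemma gap_tendsto {f : ℕ → E} (hd : Tendsto (fun t => f (t + 1) - f t) atTop (nhds 0))
    {T : ℕ} {i : ℕ → ℕ} (hi : ∀ j, i j ≤ T) {n : ℕ → ℕ} (hn : Tendsto n atTop atTop) :
    Tendsto (fun j => f (n j + i j) - f (n j)) atTop (nhds 0) := by
  rw [tendsto_zero_iff_norm_tendsto_zero]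
  have hbound : ∀ j, ‖f (n j + i j) - f (n j)‖ ≤
      ∑ l ∈ Finset.range T, ‖f (n j + l + 1) - f (n j + l)‖ := by
    intro j
    have h1 : dist (f (n j + 0)) (f (n j + i j)) ≤
        ∑ l ∈ Finset.range (i j), dist (f (n j + l)) (f (n j + l + 1)) := by
      simpa [add_assoc] using dist_le_range_sum_dist (fun l => f (n j + l)) (i j)
    have h2 : ∑ l ∈ Finset.range (i j), dist (f (n j + l)) (f (n j + l + 1)) ≤
        ∑ l ∈ Finset.range T, dist (f (n j + l)) (f (n j + l + 1)) :=
      Finset.sum_le_sum_of_subset_of_nonneg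
        (Finset.range_subset_range.2 (hi j)) (fun _ _ _ => dist_nonneg)
    calc ‖f (n j + i j) - f (n j)‖ = dist (f (n j + 0)) (f (n j + i j)) := by
          rw [dist_eq_norm, norm_sub_rev]; norm_num
    _ ≤ ∑ l ∈ Finset.range (i j), dist (f (n j + l)) (f (n j + l + 1)) := h1
    _ ≤ ∑ l ∈ Finset.range T, dist (f (n j + l)) (f (n j + l + 1)) := h2
    _ = ∑ l ∈ Finset.range T, ‖f (n j + l + 1) - f (n j + l)‖ := by
          apply Finset.sum_congr rfl; intro l _; rw [dist_eq_norm, norm_sub_rev]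
  have hS : Tendsto (fun j => ∑ l ∈ Finset.range T, ‖f (n j + l + 1) - f (n j + l)‖)
      atTop (nhds 0) := by
    have : Tendsto (fun j => ∑ l ∈ Finset.range T, ‖f (n j + l + 1) - f (n j + l)‖)
        atTop (nhds (∑ l ∈ Finset.range T, (0:ℝ))) := by
      apply tendsto_finset_sum
      intro l _
      have hnl : Tendsto (fun j => n j + l) atTop atTop :=
        tendsto_atTop_mono (fun j => Nat.le_add_right (n j) l) hn
      have := (tendsto_zero_iff_norm_tendsto_zero.1 hd).comp hnl
      exact this
    simpa using this
  exact squeeze_zero (fun j => norm_nonneg _) hbound hS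

/-- from squared norms to vectors -/
lemma tendsto_zero_of_sq {u : ℕ → E} (h : Tendsto (fun t => ‖u t‖ ^ 2) atTop (nhds 0)) :
    Tendsto u atTop (nhds 0) := by
  rw [tendsto_zero_iff_norm_tendsto_zero]
  have h1 : Tendsto (fun t => Real.sqrt (‖u t‖ ^ 2)) atTop (nhds 0) := by
    have h0 : Tendsto Real.sqrt (nhds 0) (nhds 0) := by
      simpa using Real.continuous_sqrt.tendsto 0
    exact h0.comp h
  have h2 : (fun t => Real.sqrt (‖u t‖ ^ 2)) = fun t => ‖u t‖ := by
    funext t; exact Real.sqrt_sq (norm_nonneg _)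
  rwa [h2] at h1


end Aux

/-- Augmented Lagrangian for the reformulated consensus problem. -/
noncomputable def augL {N K : ℕ} (g : Fin K → EuclideanSpace ℝ (Fin N) → ℝ)
    (h : EuclideanSpace ℝ (Fin N) → ℝ) (ρ : Fin K → ℝ)
    (xk : Fin K → EuclideanSpace ℝ (Fin N)) (x0 : EuclideanSpace ℝ (Fin N))
    (y : Fin K → EuclideanSpace ℝ (Fin N)) : ℝ :=
  (∑ k, g k (xk k)) + h x0 + (∑ k, ⟪y k, xk k - x0⟫)
    + ∑ k, ρ k / 2 * ‖xk k - x0‖ ^ 2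

section AuxAugL
variable {N K : ℕ} (g : Fin K → EuclideanSpace ℝ (Fin N) → ℝ)
    (h : EuclideanSpace ℝ (Fin N) → ℝ) (ρ : Fin K → ℝ)
    (xk : Fin K → EuclideanSpace ℝ (Fin N)) (x0 : EuclideanSpace ℝ (Fin N))
    (y : Fin K → EuclideanSpace ℝ (Fin N))

lemma augL_sep :
    augL g h ρ xk x0 y = h x0 +
      ∑ k, (g k (xk k) + ⟪y k, xk k - x0⟫ + ρ k / 2 * ‖xk k - x0‖ ^ 2) := by
  unfold augL
  rw [Finset.sum_add_distrib, Finset.sum_add_distrib]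
  ring

lemma augL_x0_form (w : EuclideanSpace ℝ (Fin N)) :
    augL g h ρ xk w y = h w + ⟪-(∑ k, (y k + ρ k • xk k)), w⟫
      + (∑ k, ρ k) / 2 * ‖w‖ ^ 2
      + ((∑ k, g k (xk k)) + (∑ k, ⟪y k, xk k⟫) + ∑ k, ρ k / 2 * ‖xk k‖ ^ 2) := by
  unfold augL
  have e1 : ∑ k, ⟪y k, xk k - w⟫ = (∑ k, ⟪y k, xk k⟫) - ∑ k, ⟪y k, w⟫ := by
    rw [← Finset.sum_sub_distrib]
    exact Finset.sum_congr rfl fun k _ => inner_sub_right _ _ _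
  have e2 : ∑ k, ρ k / 2 * ‖xk k - w‖ ^ 2 =
      ((∑ k, ρ k / 2 * ‖xk k‖ ^ 2) - ∑ k, ρ k * ⟪xk k, w⟫) + (∑ k, ρ k) / 2 * ‖w‖ ^ 2 := by
    have e0 : (∑ k, ρ k) / 2 * ‖w‖ ^ 2 = ∑ k, ρ k / 2 * ‖w‖ ^ 2 := by
      rw [Finset.sum_div, Finset.sum_mul]
    rw [e0, ← Finset.sum_sub_distrib, ← Finset.sum_add_distrib]
    refine Finset.sum_congr rfl fun k _ => ?_
    rw [@norm_sub_sq_real (EuclideanSpace ℝ (Fin N))]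
    ring
  have e3 : ⟪-(∑ k, (y k + ρ k • xk k)), w⟫ =
      -((∑ k, ⟪y k, w⟫) + ∑ k, ρ k * ⟪xk k, w⟫) := by
    rw [inner_neg_left, sum_inner]
    congr 1
    rw [← Finset.sum_add_distrib]
    exact Finset.sum_congr rfl fun k _ => by rw [inner_add_left, real_inner_smul_left]
  rw [e1, e2, e3]
  ring

lemma augL_strongConvex_x0 (hconv : ConvexOn ℝ Set.univ h) :
    StrongConvexOn Set.univ (∑ k, ρ k) (fun w => augL g h ρ xk w y) := by
  have heq : (fun w => augL g h ρ xk w y) = fun w =>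
      h w + ⟪-(∑ k, (y k + ρ k • xk k)), w⟫ + (∑ k, ρ k) / 2 * ‖w‖ ^ 2
      + ((∑ k, g k (xk k)) + (∑ k, ⟪y k, xk k⟫) + ∑ k, ρ k / 2 * ‖xk k‖ ^ 2) :=
    funext fun w => augL_x0_form g h ρ xk y w
  rw [heq]
  exact strongConvexOn_convex_add_quad hconv _ _ _

lemma augL_y_diff (y' : Fin K → EuclideanSpace ℝ (Fin N)) :
    augL g h ρ xk x0 y' = augL g h ρ xk x0 y + ∑ k, ⟪y' k - y k, xk k - x0⟫ := by
  unfold augL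
  have e : ∑ k, ⟪y' k, xk k - x0⟫ =
      (∑ k, ⟪y k, xk k - x0⟫) + ∑ k, ⟪y' k - y k, xk k - x0⟫ := by
    rw [← Finset.sum_add_distrib]
    refine Finset.sum_congr rfl fun k _ => ?_
    rw [← inner_add_left]
    congr 1
    abel
  rw [e]
  ring

lemma augL_continuous (hg : ∀ k, Continuous (g k)) (hh : Continuous h) :
    Continuous fun p : (Fin K → EuclideanSpace ℝ (Fin N)) × EuclideanSpace ℝ (Fin N)
      × (Fin K → EuclideanSpace ℝ (Fin N)) => augL g h ρ p.1 p.2.1 p.2.2 := by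
  unfold augL
  have c1 : ∀ k : Fin K, Continuous fun p :
      (Fin K → EuclideanSpace ℝ (Fin N)) × EuclideanSpace ℝ (Fin N)
      × (Fin K → EuclideanSpace ℝ (Fin N)) => p.1 k :=
    fun k => (continuous_apply k).comp continuous_fst
  have c2 : Continuous fun p : (Fin K → EuclideanSpace ℝ (Fin N)) × EuclideanSpace ℝ (Fin N)
      × (Fin K → EuclideanSpace ℝ (Fin N)) => p.2.1 :=
    continuous_fst.comp continuous_snd
  have c3 : ∀ k : Fin K, Continuous fun p :
      (Fin K → EuclideanSpace ℝ (Fin N)) × EuclideanSpace ℝ (Fin N)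
      × (Fin K → EuclideanSpace ℝ (Fin N)) => p.2.2 k :=
    fun k => (continuous_apply k).comp (continuous_snd.comp continuous_snd)
  refine ((Continuous.add (Continuous.add ?_ ?_) ?_).add ?_)
  · exact continuous_finset_sum _ fun k _ => (hg k).comp (c1 k)
  · exact hh.comp c2
  · exact continuous_finset_sum _ fun k _ => Continuous.inner (c3 k) ((c1 k).sub c2)
  · exact continuous_finset_sum _ fun k _ =>
      continuous_const.mul (((((c1 k).sub c2)).norm).pow 2)

lemma augL_tendsto (hg : ∀ k, Continuous (g k)) (hh : Continuous h)
    {xs : ℕ → Fin K → EuclideanSpace ℝ (Fin N)} {x0s : ℕ → EuclideanSpace ℝ (Fin N)}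
    {ys : ℕ → Fin K → EuclideanSpace ℝ (Fin N)}
    {xl : Fin K → EuclideanSpace ℝ (Fin N)} {x0l : EuclideanSpace ℝ (Fin N)}
    {yl : Fin K → EuclideanSpace ℝ (Fin N)}
    (hx : ∀ k, Filter.Tendsto (fun j => xs j k) Filter.atTop (nhds (xl k)))
    (hx0 : Filter.Tendsto x0s Filter.atTop (nhds x0l))
    (hy : ∀ k, Filter.Tendsto (fun j => ys j k) Filter.atTop (nhds (yl k))) :
    Filter.Tendsto (fun j => augL g h ρ (xs j) (x0s j) (ys j)) Filter.atTop
      (nhds (augL g h ρ xl x0l yl)) := by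
  unfold augL
  refine (Filter.Tendsto.add (Filter.Tendsto.add (Filter.Tendsto.add ?_ ?_) ?_) ?_)
  · exact tendsto_finset_sum _ fun k _ => ((hg k).tendsto _).comp (hx k)
  · exact (hh.tendsto _).comp hx0
  · exact tendsto_finset_sum _ fun k _ => Filter.Tendsto.inner (hy k) ((hx k).sub hx0)
  · exact tendsto_finset_sum _ fun k _ =>
      Filter.Tendsto.const_mul _ ((((hx k).sub hx0).norm).pow 2)

end AuxAugL

theorem theorem2_1_part3
    {N K : ℕ} (hK : 1 ≤ K)
    (g : Fin K → EuclideanSpace ℝ (Fin N) → ℝ)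
    (g' : Fin K → EuclideanSpace ℝ (Fin N) → EuclideanSpace ℝ (Fin N))
    (h : EuclideanSpace ℝ (Fin N) → ℝ)
    (X : Set (EuclideanSpace ℝ (Fin N)))
    (Lg ρ γ : Fin K → ℝ)
    (x : ℕ → Fin K → EuclideanSpace ℝ (Fin N))
    (x0 : ℕ → EuclideanSpace ℝ (Fin N))
    (y : ℕ → Fin K → EuclideanSpace ℝ (Fin N))
    (C : ℕ → Finset (Option (Fin K)))
    -- Assumption A1
    (hgrad : ∀ k z, HasGradientAt (g k) (g' k z) z)
    (hLpos : ∀ k, 0 < Lg k)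
    (hLip : ∀ k u v, ‖g' k u - g' k v‖ ≤ Lg k * ‖u - v‖)
    (hconv : ConvexOn ℝ Set.univ h)
    (hXne : X.Nonempty) (hXcl : IsClosed X) (hXcv : Convex ℝ X)
    (hρ : ∀ k, 0 < ρ k)
    -- Assumption A2
    (hγpos : ∀ k, 0 < γ k)
    (hstrong : ∀ k, StrongConvexOn Set.univ (γ k)
      (fun z : EuclideanSpace ℝ (Fin N) => g k z + ρ k / 2 * ‖z‖ ^ 2))
    (hA2b : ∀ k, 2 * Lg k ^ 2 < ρ k * γ k)
    (hA2c : ∀ k, Lg k ≤ ρ k)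
    -- Assumption A3 : `f` is bounded below over `X`
    (hbdd : BddBelow ((fun z => (∑ k, g k z) + h z) '' X))
    -- Algorithm 2
    (hC1 : C 1 = Finset.univ)
    (hx0upd : ∀ t : ℕ,
      (none ∈ C (t + 1) → x0 (t + 1) ∈ X ∧ ∀ z ∈ X,
        augL g h ρ (x t) (x0 (t + 1)) (y t) ≤ augL g h ρ (x t) z (y t)) ∧
      (none ∉ C (t + 1) → x0 (t + 1) = x0 t))
    (hxupd : ∀ (t : ℕ) (k : Fin K),
      (some k ∈ C (t + 1) → ∀ z : EuclideanSpace ℝ (Fin N),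
        g k (x (t + 1) k) + ⟪y t k, x (t + 1) k - x0 (t + 1)⟫
            + ρ k / 2 * ‖x (t + 1) k - x0 (t + 1)‖ ^ 2
          ≤ g k z + ⟪y t k, z - x0 (t + 1)⟫ + ρ k / 2 * ‖z - x0 (t + 1)‖ ^ 2) ∧
      (some k ∉ C (t + 1) → x (t + 1) k = x t k))
    (hyupd : ∀ (t : ℕ) (k : Fin K),
      (some k ∈ C (t + 1) → y (t + 1) k = y t k + ρ k • (x (t + 1) k - x0 (t + 1))) ∧
      (some k ∉ C (t + 1) → y (t + 1) k = y t k))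
    -- period-T essentially cyclic rule
    (T : ℕ) (hT : 1 ≤ T)
    (hcyc : ∀ (t : ℕ) (j : Option (Fin K)), ∃ i, 1 ≤ i ∧ i ≤ T ∧ j ∈ C (t + i))
    -- X is compact
    (hXcpt : IsCompact X)
    :
    letI Zstar : Set ((Fin K → EuclideanSpace ℝ (Fin N)) × EuclideanSpace ℝ (Fin N)
        × (Fin K → EuclideanSpace ℝ (Fin N))) :=
      {z | (∀ k : Fin K, g' k (z.1 k) + z.2.2 k = 0) ∧
           (z.2.1 ∈ X ∧ ∀ w ∈ X,
             h z.2.1 + ∑ k, ⟪z.2.2 k, z.1 k - z.2.1⟫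
               ≤ h w + ∑ k, ⟪z.2.2 k, z.1 k - w⟫) ∧
           (∀ k : Fin K, z.1 k = z.2.1)}
    Zstar.Nonempty ∧
    Bornology.IsBounded (Set.range (fun t : ℕ => (x t, x0 t, y t))) ∧
    Tendsto (fun t : ℕ => Metric.infDist (x t, x0 t, y t) Zstar) atTop (nhds 0) := by
  classical
  have hKne : Nonempty (Fin K) := ⟨⟨0, hK⟩⟩
  have hgc : ∀ k, Continuous (g k) := fun k =>
    continuous_iff_continuousAt.2 fun z => (hgrad k z).hasFDerivAt.differentiableAt.continuousAt
  have hg'c : ∀ k, Continuous (g' k) := fun k => lipschitz_continuous (hLpos k).le (hLip k)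
  have hhc : Continuous h := by
    rw [← continuousOn_univ]
    exact hconv.continuousOn isOpen_univ
  obtain ⟨m, hm⟩ := hbdd
  -- multipliers track gradients
  have hS1 : ∀ t, 1 ≤ t → ∀ k, y t k = - g' k (x t k) := by
    intro t
    induction t with
    | zero => intro h0; exact absurd h0 (by omega)
    | succ n ih =>
      intro _ k
      by_cases hk : some k ∈ C (n+1)
      · have hmin := (hxupd n k).1 hk
        have hgp := gradPhi (hgrad k) (y n k) (x0 (n+1)) (ρ k) (x (n+1) k)
        have h0 := foc_zero hgp (fun z => hmin z)
        have hy := (hyupd n k).1 hk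
        rw [hy]
        have : y n k + ρ k • (x (n+1) k - x0 (n+1)) =
            -(g' k (x (n+1) k)) := by
          have h1 : g' k (x (n+1) k) + (y n k + ρ k • (x (n+1) k - x0 (n+1))) = 0 := h0
          linear_combination (norm := module) h1
        rw [this]
      · have hy := (hyupd n k).2 hk
        have hx := (hxupd n k).2 hk
        rcases Nat.eq_zero_or_pos n with rfl | hn
        · rw [hC1] at hk
          exact absurd (Finset.mem_univ _) hk
        · rw [hy, hx]
          exact ih hn k
  have hS2 : ∀ t, 1 ≤ t → x0 t ∈ X := by
    intro t
    induction t with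
    | zero => intro h0; exact absurd h0 (by omega)
    | succ n ih =>
      intro _
      by_cases h0 : none ∈ C (n+1)
      · exact ((hx0upd n).1 h0).1
      · rw [(hx0upd n).2 h0]
        rcases Nat.eq_zero_or_pos n with rfl | hn
        · rw [hC1] at h0
          exact absurd (Finset.mem_univ _) h0
        · exact ih hn
  set σ : ℝ := ∑ k, ρ k with hσ
  have hσpos : 0 < σ := Finset.sum_pos (fun k _ => hρ k) Finset.univ_nonempty
  set cc : Fin K → ℝ := fun k => γ k / 2 - Lg k ^ 2 / ρ k with hcc
  have hccpos : ∀ k, 0 < cc k := by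
    intro k
    have h1 : Lg k ^ 2 / ρ k < γ k / 2 := by
      rw [div_lt_div_iff₀ (hρ k) two_pos]
      nlinarith [hA2b k]
    simp only [hcc]
    linarith
  set ℒ : ℕ → ℝ := fun t => augL g h ρ (x t) (x0 t) (y t) with hℒ
  have hS3 : ∀ t, 1 ≤ t → ℒ (t+1) +
      ((∑ k, cc k * ‖x (t+1) k - x t k‖ ^ 2) + σ / 2 * ‖x0 (t+1) - x0 t‖ ^ 2) ≤ ℒ t := by
    intro t ht
    have ha : augL g h ρ (x t) (x0 (t+1)) (y t) + σ / 2 * ‖x0 (t+1) - x0 t‖ ^ 2 ≤ ℒ t := by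
      by_cases h0 : none ∈ C (t+1)
      · obtain ⟨hmem, hmin⟩ := (hx0upd t).1 h0
        have hscu := augL_strongConvex_x0 g h ρ (x t) (y t) hconv
        have hsc : StrongConvexOn X σ (fun w => augL g h ρ (x t) w (y t)) :=
          ⟨hXcv, fun p hp q hq a b hha hhb hab =>
            hscu.2 (Set.mem_univ p) (Set.mem_univ q) hha hhb hab⟩
        have hg2 := strong_growth hsc hmem (hS2 t ht) hmin
        rw [norm_sub_rev]
        exact hg2
      · rw [(hx0upd t).2 h0]
        simp [hℒ]
    have hb : augL g h ρ (x (t+1)) (x0 (t+1)) (y t)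
        + ∑ k, γ k / 2 * ‖x (t+1) k - x t k‖ ^ 2
        ≤ augL g h ρ (x t) (x0 (t+1)) (y t) := by
      have per : ∀ k : Fin K,
          (g k (x (t+1) k) + ⟪y t k, x (t+1) k - x0 (t+1)⟫
            + ρ k / 2 * ‖x (t+1) k - x0 (t+1)‖ ^ 2)
          + γ k / 2 * ‖x (t+1) k - x t k‖ ^ 2
          ≤ g k (x t k) + ⟪y t k, x t k - x0 (t+1)⟫
            + ρ k / 2 * ‖x t k - x0 (t+1)‖ ^ 2 := by
        intro k
        by_cases hk : some k ∈ C (t+1)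
        · have hmin := (hxupd t k).1 hk
          have hsc := phi_strongConvex (hstrong k) (y t k) (x0 (t+1))
          have hg2 := strong_growth hsc (Set.mem_univ (x (t+1) k)) (Set.mem_univ (x t k))
            (fun w _ => hmin w)
          rw [norm_sub_rev (x (t+1) k) (x t k)]
          exact hg2
        · rw [(hxupd t k).2 hk]
          simp
      calc augL g h ρ (x (t+1)) (x0 (t+1)) (y t)
            + ∑ k, γ k / 2 * ‖x (t+1) k - x t k‖ ^ 2
          = h (x0 (t+1)) + ∑ k, ((g k (x (t+1) k) + ⟪y t k, x (t+1) k - x0 (t+1)⟫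
              + ρ k / 2 * ‖x (t+1) k - x0 (t+1)‖ ^ 2)
              + γ k / 2 * ‖x (t+1) k - x t k‖ ^ 2) := by
            have hsplit : ∑ k, ((g k (x (t+1) k) + ⟪y t k, x (t+1) k - x0 (t+1)⟫
                + ρ k / 2 * ‖x (t+1) k - x0 (t+1)‖ ^ 2)
                + γ k / 2 * ‖x (t+1) k - x t k‖ ^ 2)
                = (∑ k, (g k (x (t+1) k) + ⟪y t k, x (t+1) k - x0 (t+1)⟫
                + ρ k / 2 * ‖x (t+1) k - x0 (t+1)‖ ^ 2))
                + ∑ k, γ k / 2 * ‖x (t+1) k - x t k‖ ^ 2 := Finset.sum_add_distrib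
            rw [augL_sep, hsplit]; ring
        _ ≤ h (x0 (t+1)) + ∑ k, (g k (x t k) + ⟪y t k, x t k - x0 (t+1)⟫
              + ρ k / 2 * ‖x t k - x0 (t+1)‖ ^ 2) := by
            have h4 := Finset.sum_le_sum (fun k (_ : k ∈ Finset.univ) => per k)
            linarith [h4]
        _ = augL g h ρ (x t) (x0 (t+1)) (y t) := (augL_sep g h ρ (x t) (x0 (t+1)) (y t)).symm
    have hc : ℒ (t+1) ≤ augL g h ρ (x (t+1)) (x0 (t+1)) (y t)
        + ∑ k, Lg k ^ 2 / ρ k * ‖x (t+1) k - x t k‖ ^ 2 := by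
      have hdiff := augL_y_diff g h ρ (x (t+1)) (x0 (t+1)) (y t) (y (t+1))
      have per : ∀ k : Fin K, ⟪y (t+1) k - y t k, x (t+1) k - x0 (t+1)⟫ ≤
          Lg k ^ 2 / ρ k * ‖x (t+1) k - x t k‖ ^ 2 := by
        intro k
        by_cases hk : some k ∈ C (t+1)
        · have hy := (hyupd t k).1 hk
          have hdel : y (t+1) k - y t k = ρ k • (x (t+1) k - x0 (t+1)) := by rw [hy]; abel
          have hxx : x (t+1) k - x0 (t+1) = (ρ k)⁻¹ • (y (t+1) k - y t k) := by
            rw [hdel, smul_smul, inv_mul_cancel₀ (ne_of_gt (hρ k)), one_smul]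
          have hnorm : ‖y (t+1) k - y t k‖ ≤ Lg k * ‖x (t+1) k - x t k‖ := by
            rw [hS1 (t+1) (by omega) k, hS1 t ht k]
            have h2 : -g' k (x (t+1) k) - -g' k (x t k)
                = -(g' k (x (t+1) k) - g' k (x t k)) := by abel
            rw [h2, norm_neg]
            exact hLip k (x (t+1) k) (x t k)
          rw [hxx, real_inner_smul_right, real_inner_self_eq_norm_sq]
          have h3 : ‖y (t+1) k - y t k‖ ^ 2 ≤ Lg k ^ 2 * ‖x (t+1) k - x t k‖ ^ 2 := by
            rw [← mul_pow]
            exact pow_le_pow_left₀ (norm_nonneg _) hnorm 2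
          have hρi : (0:ℝ) ≤ (ρ k)⁻¹ := inv_nonneg.mpr (hρ k).le
          calc (ρ k)⁻¹ * ‖y (t+1) k - y t k‖ ^ 2
              ≤ (ρ k)⁻¹ * (Lg k ^ 2 * ‖x (t+1) k - x t k‖ ^ 2) :=
                mul_le_mul_of_nonneg_left h3 hρi
          _ = Lg k ^ 2 / ρ k * ‖x (t+1) k - x t k‖ ^ 2 := by ring
        · rw [(hyupd t k).2 hk, sub_self, inner_zero_left]
          exact mul_nonneg (div_nonneg (sq_nonneg _) (hρ k).le) (sq_nonneg _)
      calc ℒ (t+1) = augL g h ρ (x (t+1)) (x0 (t+1)) (y t)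
            + ∑ k, ⟪y (t+1) k - y t k, x (t+1) k - x0 (t+1)⟫ := hdiff
      _ ≤ augL g h ρ (x (t+1)) (x0 (t+1)) (y t)
            + ∑ k, Lg k ^ 2 / ρ k * ‖x (t+1) k - x t k‖ ^ 2 :=
          add_le_add_right (Finset.sum_le_sum fun k _ => per k) _
    have hsum : (∑ k, γ k / 2 * ‖x (t+1) k - x t k‖ ^ 2)
        - ∑ k, Lg k ^ 2 / ρ k * ‖x (t+1) k - x t k‖ ^ 2
        = ∑ k, cc k * ‖x (t+1) k - x t k‖ ^ 2 := by
      rw [← Finset.sum_sub_distrib]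
      refine Finset.sum_congr rfl fun k _ => ?_
      rw [hcc]
      ring
    linarith [ha, hb, hc, hsum]
  have hS4 : ∀ t, 1 ≤ t → m ≤ ℒ t := by
    intro t ht
    have per : ∀ k : Fin K, g k (x0 t) ≤ g k (x t k) + ⟪y t k, x t k - x0 t⟫
        + ρ k / 2 * ‖x t k - x0 t‖ ^ 2 := by
      intro k
      have hd := descent_lemma (hgrad k) (hLpos k) (hLip k) (x t k) (x0 t)
      have hswap : ⟪g' k (x t k), x0 t - x t k⟫ = - ⟪g' k (x t k), x t k - x0 t⟫ := by
        rw [← inner_neg_right, neg_sub]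
      have hnrm : ‖x0 t - x t k‖ = ‖x t k - x0 t‖ := norm_sub_rev _ _
      rw [hnrm, hswap] at hd
      have hinner : ⟪y t k, x t k - x0 t⟫ = - ⟪g' k (x t k), x t k - x0 t⟫ := by
        rw [hS1 t ht k, inner_neg_left]
      rw [hinner]
      have hLρ : Lg k / 2 * ‖x t k - x0 t‖ ^ 2 ≤ ρ k / 2 * ‖x t k - x0 t‖ ^ 2 := by
        have := hA2c k
        nlinarith [sq_nonneg ‖x t k - x0 t‖]
      linarith [hd, hLρ]
    have hsum := Finset.sum_le_sum (fun k (_ : k ∈ Finset.univ) => per k)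
    have hLsep := augL_sep g h ρ (x t) (x0 t) (y t)
    have hmem : m ≤ (∑ k, g k (x0 t)) + h (x0 t) := hm ⟨x0 t, hS2 t ht, rfl⟩
    have : ℒ t = augL g h ρ (x t) (x0 t) (y t) := rfl
    rw [this, hLsep]
    linarith [hsum, hmem]
  have hnn : ∀ (t : ℕ) (k : Fin K), (0:ℝ) ≤ cc k * ‖x (t+1) k - x t k‖ ^ 2 :=
    fun t k => mul_nonneg (hccpos k).le (sq_nonneg _)
  have hanti : Antitone fun n => ℒ (n+1) := by
    apply antitone_nat_of_succ_le
    intro n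
    have h5 := hS3 (n+1) (by omega)
    have h1 : (0:ℝ) ≤ ∑ k, cc k * ‖x (n+1+1) k - x (n+1) k‖ ^ 2 :=
      Finset.sum_nonneg fun k _ => hnn _ k
    have h2 : (0:ℝ) ≤ σ / 2 * ‖x0 (n+1+1) - x0 (n+1)‖ ^ 2 :=
      mul_nonneg (by linarith) (sq_nonneg _)
    linarith
  have hbd2 : BddBelow (Set.range fun n => ℒ (n+1)) := by
    refine ⟨m, ?_⟩
    rintro v ⟨n, rfl⟩
    exact hS4 (n+1) (by omega)
  have hconvL := tendsto_atTop_ciInf hanti hbd2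
  have hdiff0 : Tendsto (fun n => ℒ (n+1) - ℒ (n+1+1)) atTop (nhds 0) := by
    have h2 : Tendsto (fun n => ℒ (n+1+1)) atTop (nhds (⨅ n, ℒ (n+1))) :=
      hconvL.comp (tendsto_add_atTop_nat 1)
    simpa using hconvL.sub h2
  have hDx : ∀ k, Tendsto (fun t => x (t+1) k - x t k) atTop (nhds 0) := by
    intro k
    have hsq : Tendsto (fun n => ‖x (n+1+1) k - x (n+1) k‖ ^ 2) atTop (nhds 0) := by
      apply squeeze_zero (fun n => sq_nonneg _) (fun n => ?_)
        (show Tendsto (fun n => (ℒ (n+1) - ℒ (n+1+1)) / cc k) atTop (nhds 0) by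
          simpa using hdiff0.div_const (cc k))
      have h5 := hS3 (n+1) (by omega)
      have h6 : cc k * ‖x (n+1+1) k - x (n+1) k‖ ^ 2 ≤
          ∑ j, cc j * ‖x (n+1+1) j - x (n+1) j‖ ^ 2 :=
        Finset.single_le_sum (fun j (_ : j ∈ Finset.univ) => hnn _ j) (Finset.mem_univ k)
      have h7 : (0:ℝ) ≤ σ / 2 * ‖x0 (n+1+1) - x0 (n+1)‖ ^ 2 :=
        mul_nonneg (by linarith) (sq_nonneg _)
      rw [le_div_iff₀ (hccpos k)]
      nlinarith
    have h8 := tendsto_zero_of_sq hsq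
    exact (Filter.tendsto_add_atTop_iff_nat
      (f := fun t => x (t+1) k - x t k) 1).mp h8
  have hDx0 : Tendsto (fun t => x0 (t+1) - x0 t) atTop (nhds 0) := by
    have hsq : Tendsto (fun n => ‖x0 (n+1+1) - x0 (n+1)‖ ^ 2) atTop (nhds 0) := by
      apply squeeze_zero (fun n => sq_nonneg _) (fun n => ?_)
        (show Tendsto (fun n => (ℒ (n+1) - ℒ (n+1+1)) / (σ / 2)) atTop (nhds 0) by
          simpa using hdiff0.div_const (σ / 2))
      have h5 := hS3 (n+1) (by omega)
      have h1 : (0:ℝ) ≤ ∑ j, cc j * ‖x (n+1+1) j - x (n+1) j‖ ^ 2 :=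
        Finset.sum_nonneg fun j _ => hnn _ j
      rw [le_div_iff₀ (by linarith : (0:ℝ) < σ / 2)]
      nlinarith
    have h8 := tendsto_zero_of_sq hsq
    exact (Filter.tendsto_add_atTop_iff_nat (f := fun t => x0 (t+1) - x0 t) 1).mp h8
  have hDy : ∀ k, Tendsto (fun t => y (t+1) k - y t k) atTop (nhds 0) := by
    intro k
    rw [tendsto_zero_iff_norm_tendsto_zero]
    have hb2 : ∀ᶠ t in atTop, ‖y (t+1) k - y t k‖ ≤ Lg k * ‖x (t+1) k - x t k‖ := by
      rw [eventually_atTop]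
      refine ⟨1, fun t ht => ?_⟩
      by_cases hk : some k ∈ C (t+1)
      · rw [hS1 (t+1) (by omega) k, hS1 t ht k]
        have h2 : -g' k (x (t+1) k) - -g' k (x t k)
            = -(g' k (x (t+1) k) - g' k (x t k)) := by abel
        rw [h2, norm_neg]
        exact hLip k (x (t+1) k) (x t k)
      · rw [(hyupd t k).2 hk, sub_self, norm_zero]
        exact mul_nonneg (hLpos k).le (norm_nonneg _)
    have hg2 : Tendsto (fun t => Lg k * ‖x (t+1) k - x t k‖) atTop (nhds 0) := by
      have := ((hDx k).norm).const_mul (Lg k)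
      simpa using this
    exact squeeze_zero' (Filter.Eventually.of_forall fun t => norm_nonneg _) hb2 hg2
  have hE : ∀ k, Tendsto (fun t => x t k - x0 t) atTop (nhds 0) := by
    intro k
    rw [tendsto_zero_iff_norm_tendsto_zero]
    set e : ℕ → EuclideanSpace ℝ (Fin N) := fun t => x t k - x0 t with he
    have hρinv : (0:ℝ) ≤ (ρ k)⁻¹ := inv_nonneg.mpr (hρ k).le
    have hbound2 : ∀ t, ‖e t‖ ≤ ∑ l ∈ Finset.range T,
        ((ρ k)⁻¹ * ‖y (t+l+1) k - y (t+l) k‖ + ‖e (t+l+1) - e (t+l)‖) := by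
      intro t
      obtain ⟨i, hi1, hiT, hiC⟩ := hcyc t (some k)
      have harith : t + (i-1) + 1 = t + i := by omega
      have hyu := (hyupd (t + (i-1)) k).1 (by rw [harith]; exact hiC)
      rw [harith] at hyu
      have hei : e (t+i) = (ρ k)⁻¹ • (y (t+i) k - y (t+(i-1)) k) := by
        have h9 : y (t+i) k - y (t+(i-1)) k = ρ k • e (t+i) := by
          rw [hyu, he]; abel
        rw [h9, smul_smul, inv_mul_cancel₀ (ne_of_gt (hρ k)), one_smul]
      have h1 : ‖e t‖ ≤ ‖e (t+i)‖ + ∑ l ∈ Finset.range i, ‖e (t+l+1) - e (t+l)‖ := by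
        have hd := dist_le_range_sum_dist (fun l => e (t+l)) i
        have heq : e (t+i) + (e t - e (t+i)) = e t := by abel
        have htr : ‖e t‖ ≤ ‖e (t+i)‖ + ‖e t - e (t+i)‖ := by
          calc ‖e t‖ = ‖e (t+i) + (e t - e (t+i))‖ := by rw [heq]
          _ ≤ ‖e (t+i)‖ + ‖e t - e (t+i)‖ := norm_add_le _ _
        have hdist : ‖e t - e (t+i)‖ ≤ ∑ l ∈ Finset.range i, ‖e (t+l+1) - e (t+l)‖ := by
          have h0 : dist (e (t+0)) (e (t+i)) = ‖e t - e (t+i)‖ := by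
            rw [dist_eq_norm]; norm_num
          calc ‖e t - e (t+i)‖ = dist (e (t+0)) (e (t+i)) := h0.symm
          _ ≤ ∑ l ∈ Finset.range i, dist (e (t+l)) (e (t+l+1)) := hd
          _ = ∑ l ∈ Finset.range i, ‖e (t+l+1) - e (t+l)‖ := by
              refine Finset.sum_congr rfl fun l _ => ?_
              rw [dist_eq_norm, norm_sub_rev]
        linarith
      have h2 : ‖e (t+i)‖ ≤ ∑ l ∈ Finset.range T, (ρ k)⁻¹ * ‖y (t+l+1) k - y (t+l) k‖ := by
        have hsingle : (ρ k)⁻¹ * ‖y (t+(i-1)+1) k - y (t+(i-1)) k‖ ≤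
            ∑ l ∈ Finset.range T, (ρ k)⁻¹ * ‖y (t+l+1) k - y (t+l) k‖ :=
          Finset.single_le_sum (f := fun l => (ρ k)⁻¹ * ‖y (t+l+1) k - y (t+l) k‖)
            (fun l (_ : l ∈ Finset.range T) => mul_nonneg hρinv (norm_nonneg _))
            (Finset.mem_range.mpr (by omega : i - 1 < T))
        rw [harith] at hsingle
        calc ‖e (t+i)‖ = (ρ k)⁻¹ * ‖y (t+i) k - y (t+(i-1)) k‖ := by
              rw [hei, norm_smul, Real.norm_eq_abs, abs_of_nonneg hρinv]
        _ ≤ _ := hsingle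
      have h3 : ∑ l ∈ Finset.range i, ‖e (t+l+1) - e (t+l)‖ ≤
          ∑ l ∈ Finset.range T, ‖e (t+l+1) - e (t+l)‖ :=
        Finset.sum_le_sum_of_subset_of_nonneg (Finset.range_subset_range.2 hiT)
          (fun _ _ _ => norm_nonneg _)
      have h4 : ∑ l ∈ Finset.range T,
          ((ρ k)⁻¹ * ‖y (t+l+1) k - y (t+l) k‖ + ‖e (t+l+1) - e (t+l)‖)
          = (∑ l ∈ Finset.range T, (ρ k)⁻¹ * ‖y (t+l+1) k - y (t+l) k‖)
          + ∑ l ∈ Finset.range T, ‖e (t+l+1) - e (t+l)‖ := Finset.sum_add_distrib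
      linarith
    have hlim : Tendsto (fun t => ∑ l ∈ Finset.range T,
        ((ρ k)⁻¹ * ‖y (t+l+1) k - y (t+l) k‖ + ‖e (t+l+1) - e (t+l)‖)) atTop (nhds 0) := by
      have hmain : Tendsto (fun t => ∑ l ∈ Finset.range T,
          ((ρ k)⁻¹ * ‖y (t+l+1) k - y (t+l) k‖ + ‖e (t+l+1) - e (t+l)‖)) atTop
          (nhds (∑ _l ∈ Finset.range T, (0:ℝ))) := by
        apply tendsto_finset_sum
        intro l _
        have hshift : Tendsto (fun t : ℕ => t + l) atTop atTop :=
          tendsto_atTop_mono (fun j => Nat.le_add_right j l) tendsto_id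
        have hA : Tendsto (fun t => (ρ k)⁻¹ * ‖y (t+l+1) k - y (t+l) k‖) atTop (nhds 0) := by
          have := (((hDy k).norm).comp hshift).const_mul ((ρ k)⁻¹)
          simpa using this
        have hB : Tendsto (fun t => ‖e (t+l+1) - e (t+l)‖) atTop (nhds 0) := by
          have hde : Tendsto (fun s => e (s+1) - e s) atTop (nhds 0) := by
            have heq2 : (fun s => e (s+1) - e s)
                = fun s => (x (s+1) k - x s k) - (x0 (s+1) - x0 s) := by
              funext s; rw [he]; dsimp only; abel
            rw [heq2]
            simpa using (hDx k).sub hDx0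
          have := (hde.norm).comp hshift
          simpa [Function.comp_def] using this
        simpa using hA.add hB
      simpa using hmain
    exact squeeze_zero (fun t => norm_nonneg _) hbound2 hlim
  have hbound : Bornology.IsBounded (Set.range fun t : ℕ => (x t, x0 t, y t)) := by
    obtain ⟨CX, hCX⟩ := isBounded_iff_forall_norm_le.1 hXcpt.isBounded
    set B0 : ℝ := max CX ‖x0 0‖ with hB0
    have hx0b : ∀ t, ‖x0 t‖ ≤ B0 := by
      intro t
      rcases Nat.eq_zero_or_pos t with rfl | ht
      · exact le_max_right _ _
      · exact le_trans (hCX _ (hS2 t ht)) (le_max_left _ _)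
    have hE2 : Tendsto (fun t => (fun k => x t k - x0 t : Fin K → EuclideanSpace ℝ (Fin N)))
        atTop (nhds 0) := by
      rw [tendsto_pi_nhds]
      intro k
      simpa using hE k
    have hE2n : Tendsto (fun t => ‖(fun k => x t k - x0 t : Fin K → EuclideanSpace ℝ (Fin N))‖)
        atTop (nhds 0) := by
      simpa using hE2.norm
    obtain ⟨Ce, hCe⟩ := hE2n.bddAbove_range
    have hCe' : ∀ t, ‖(fun k => x t k - x0 t : Fin K → EuclideanSpace ℝ (Fin N))‖ ≤ Ce :=
      fun t => hCe ⟨t, rfl⟩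
    have hCe0 : 0 ≤ Ce := le_trans (norm_nonneg _) (hCe' 0)
    have hB00 : 0 ≤ B0 := le_trans (norm_nonneg (x0 0)) (le_max_right _ _)
    have hxb : ∀ t k, ‖x t k‖ ≤ B0 + Ce := by
      intro t k
      have h1 : ‖x t k - x0 t‖ ≤ Ce :=
        le_trans (norm_le_pi_norm (fun k => x t k - x0 t) k) (hCe' t)
      calc ‖x t k‖ = ‖x0 t + (x t k - x0 t)‖ := by rw [add_sub_cancel]
      _ ≤ ‖x0 t‖ + ‖x t k - x0 t‖ := norm_add_le _ _
      _ ≤ B0 + Ce := add_le_add (hx0b t) h1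
    set Cy1 : ℝ := Finset.univ.sup' (Finset.univ_nonempty) (fun k => Lg k * (B0 + Ce) + ‖g' k 0‖)
      with hCy1
    have hyb : ∀ t, 1 ≤ t → ∀ k, ‖y t k‖ ≤ Cy1 := by
      intro t ht k
      rw [hS1 t ht k, norm_neg]
      have h1 : ‖g' k (x t k) - g' k 0‖ ≤ Lg k * ‖x t k - 0‖ := hLip k (x t k) 0
      rw [sub_zero] at h1
      have h2 : ‖g' k (x t k)‖ ≤ Lg k * ‖x t k‖ + ‖g' k 0‖ := by
        calc ‖g' k (x t k)‖ = ‖(g' k (x t k) - g' k 0) + g' k 0‖ := by rw [sub_add_cancel]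
        _ ≤ ‖g' k (x t k) - g' k 0‖ + ‖g' k 0‖ := norm_add_le _ _
        _ ≤ Lg k * ‖x t k‖ + ‖g' k 0‖ := by linarith
      have h3 : Lg k * ‖x t k‖ ≤ Lg k * (B0 + Ce) :=
        mul_le_mul_of_nonneg_left (hxb t k) (hLpos k).le
      have h4 : Lg k * (B0 + Ce) + ‖g' k 0‖ ≤ Cy1 :=
        Finset.le_sup' (f := fun k => Lg k * (B0 + Ce) + ‖g' k 0‖) (Finset.mem_univ k)
      linarith
    set Cy : ℝ := max Cy1 ‖y 0‖ with hCy
    have hCynn : 0 ≤ Cy := le_trans (norm_nonneg (y 0)) (le_max_right _ _)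
    have hyb' : ∀ t, ‖y t‖ ≤ Cy := by
      intro t
      rcases Nat.eq_zero_or_pos t with rfl | ht
      · exact le_max_right _ _
      · rw [pi_norm_le_iff_of_nonneg hCynn]
        exact fun k => le_trans (hyb t ht k) (le_max_left _ _)
    rw [isBounded_iff_forall_norm_le]
    refine ⟨max (B0 + Ce) (max B0 Cy), ?_⟩
    rintro v ⟨t, rfl⟩
    rw [Prod.norm_def]
    apply max_le
    · refine le_trans ?_ (le_max_left _ _)
      rw [pi_norm_le_iff_of_nonneg (by linarith)]
      exact fun k => hxb t k
    · rw [Prod.norm_def]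
      refine le_trans (max_le_max (hx0b t) (hyb' t)) (le_max_right _ _)
  have hstat : ∀ n : ℕ → ℕ, Tendsto n atTop atTop →
      ∀ zh : (Fin K → EuclideanSpace ℝ (Fin N)) × EuclideanSpace ℝ (Fin N)
        × (Fin K → EuclideanSpace ℝ (Fin N)),
      Tendsto (fun j => (x (n j), x0 (n j), y (n j))) atTop (nhds zh) →
      (∀ k : Fin K, g' k (zh.1 k) + zh.2.2 k = 0) ∧
      (zh.2.1 ∈ X ∧ ∀ w ∈ X,
        h zh.2.1 + ∑ k, ⟪zh.2.2 k, zh.1 k - zh.2.1⟫ ≤ h w + ∑ k, ⟪zh.2.2 k, zh.1 k - w⟫) ∧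
      (∀ k : Fin K, zh.1 k = zh.2.1) := by
    intro n hn zh hz
    obtain ⟨xh, x0h, yh⟩ := zh
    dsimp only at hz ⊢
    have hzx : Tendsto (fun j => x (n j)) atTop (nhds xh) :=
      (continuous_fst.tendsto _).comp hz
    have hzrest : Tendsto (fun j => (x0 (n j), y (n j))) atTop (nhds (x0h, yh)) :=
      (continuous_snd.tendsto _).comp hz
    have hzx0 : Tendsto (fun j => x0 (n j)) atTop (nhds x0h) :=
      (continuous_fst.tendsto _).comp hzrest
    have hzy : Tendsto (fun j => y (n j)) atTop (nhds yh) :=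
      (continuous_snd.tendsto _).comp hzrest
    have hzxk : ∀ k, Tendsto (fun j => x (n j) k) atTop (nhds (xh k)) :=
      fun k => ((continuous_apply k).tendsto _).comp hzx
    have hzyk : ∀ k, Tendsto (fun j => y (n j) k) atTop (nhds (yh k)) :=
      fun k => ((continuous_apply k).tendsto _).comp hzy
    have hev1 : ∀ᶠ j in atTop, 1 ≤ n j := hn.eventually_ge_atTop 1
    -- consensus at the limit
    have hcons : ∀ k, xh k = x0h := by
      intro k
      have h1 : Tendsto (fun j => x (n j) k - x0 (n j)) atTop (nhds (xh k - x0h)) :=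
        (hzxk k).sub hzx0
      have h2 : Tendsto (fun j => x (n j) k - x0 (n j)) atTop (nhds 0) := (hE k).comp hn
      exact sub_eq_zero.mp (tendsto_nhds_unique h1 h2)
    -- gradients at the limit
    have hyh : ∀ k, yh k = - g' k (xh k) := by
      intro k
      have h2 : Tendsto (fun j => - g' k (x (n j) k)) atTop (nhds (- g' k (xh k))) :=
        (((hg'c k).tendsto _).comp (hzxk k)).neg
      have hevq : (fun j => y (n j) k) =ᶠ[atTop] fun j => - g' k (x (n j) k) := by
        filter_upwards [hev1] with j hj using hS1 (n j) hj k
      exact tendsto_nhds_unique ((hzyk k).congr' hevq) h2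
    have hx0hX : x0h ∈ X := by
      apply hXcl.mem_of_tendsto hzx0
      filter_upwards [hev1] with j hj using hS2 (n j) hj
    -- extract an x0-update time within T steps
    obtain ⟨i, hi⟩ : ∃ i : ℕ → ℕ, ∀ j, 1 ≤ i j ∧ i j ≤ T ∧ none ∈ C (n j + i j) :=
      ⟨fun j => (hcyc (n j) none).choose, fun j => (hcyc (n j) none).choose_spec⟩
    set p : ℕ → ℕ := fun j => n j + (i j - 1) with hpdef
    have hp1 : ∀ j, p j + 1 = n j + i j := by
      intro j
      have := (hi j).1
      simp only [hpdef]
      omega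
    have hupd : ∀ j, x0 (p j + 1) ∈ X ∧ ∀ w ∈ X,
        augL g h ρ (x (p j)) (x0 (p j + 1)) (y (p j)) ≤ augL g h ρ (x (p j)) w (y (p j)) :=
      fun j => (hx0upd (p j)).1 (by rw [hp1 j]; exact (hi j).2.2)
    -- limits along the shifted times
    have hgapx : ∀ k, Tendsto (fun j => x (p j) k) atTop (nhds (xh k)) := by
      intro k
      have hgap := gap_tendsto (f := fun t => x t k) (hDx k)
        (fun j => (by have := (hi j).2.1; omega : i j - 1 ≤ T)) hn
      have h9 : Tendsto (fun j => x (n j) k + (x (n j + (i j - 1)) k - x (n j) k))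
          atTop (nhds (xh k + 0)) := (hzxk k).add hgap
      rw [add_zero] at h9
      refine h9.congr fun j => ?_
      simp only [hpdef]
      abel
    have hgapy : ∀ k, Tendsto (fun j => y (p j) k) atTop (nhds (yh k)) := by
      intro k
      have hgap := gap_tendsto (f := fun t => y t k) (hDy k)
        (fun j => (by have := (hi j).2.1; omega : i j - 1 ≤ T)) hn
      have h9 : Tendsto (fun j => y (n j) k + (y (n j + (i j - 1)) k - y (n j) k))
          atTop (nhds (yh k + 0)) := (hzyk k).add hgap
      rw [add_zero] at h9
      refine h9.congr fun j => ?_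
      simp only [hpdef]
      abel
    have hgapx0 : Tendsto (fun j => x0 (p j + 1)) atTop (nhds x0h) := by
      have hgap := gap_tendsto (f := x0) hDx0 (fun j => (hi j).2.1) hn
      have h9 : Tendsto (fun j => x0 (n j) + (x0 (n j + i j) - x0 (n j))) atTop
          (nhds (x0h + 0)) := hzx0.add hgap
      rw [add_zero] at h9
      refine h9.congr fun j => ?_
      rw [hp1 j]
      abel
    have hLHS : Tendsto (fun j => augL g h ρ (x (p j)) (x0 (p j + 1)) (y (p j))) atTop
        (nhds (augL g h ρ xh x0h yh)) := augL_tendsto g h ρ hgc hhc hgapx hgapx0 hgapy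
    have hkey : ∀ v ∈ X, h x0h ≤ h v + (∑ k, ⟪yh k, x0h - v⟫) + σ / 2 * ‖x0h - v‖ ^ 2 := by
      intro v hv
      have hRHS : Tendsto (fun j => augL g h ρ (x (p j)) v (y (p j))) atTop
          (nhds (augL g h ρ xh v yh)) :=
        augL_tendsto g h ρ hgc hhc hgapx tendsto_const_nhds hgapy
      have hineq : augL g h ρ xh x0h yh ≤ augL g h ρ xh v yh :=
        le_of_tendsto_of_tendsto' hLHS hRHS (fun j => (hupd j).2 v hv)
      rw [augL_sep, augL_sep] at hineq
      have hsum1 : ∑ k, (g k (xh k) + ⟪yh k, xh k - x0h⟫ + ρ k / 2 * ‖xh k - x0h‖ ^ 2)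
          = ∑ k, g k (xh k) := by
        refine Finset.sum_congr rfl fun k _ => ?_
        rw [hcons k, sub_self, inner_zero_right, norm_zero]
        ring
      have hsum2 : ∑ k, (g k (xh k) + ⟪yh k, xh k - v⟫ + ρ k / 2 * ‖xh k - v‖ ^ 2)
          = (∑ k, g k (xh k)) + ((∑ k, ⟪yh k, x0h - v⟫) + ∑ k, ρ k / 2 * ‖x0h - v‖ ^ 2) := by
        have e5 : ∑ k, (g k (xh k) + ⟪yh k, xh k - v⟫ + ρ k / 2 * ‖xh k - v‖ ^ 2)
            = ∑ k, (g k (xh k) + (⟪yh k, x0h - v⟫ + ρ k / 2 * ‖x0h - v‖ ^ 2)) := by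
          refine Finset.sum_congr rfl fun k _ => ?_
          rw [hcons k]
          ring
        have e6 : ∑ k, (g k (xh k) + (⟪yh k, x0h - v⟫ + ρ k / 2 * ‖x0h - v‖ ^ 2))
            = (∑ k, g k (xh k)) + ∑ k, (⟪yh k, x0h - v⟫ + ρ k / 2 * ‖x0h - v‖ ^ 2) :=
          Finset.sum_add_distrib
        have e7 : ∑ k, (⟪yh k, x0h - v⟫ + ρ k / 2 * ‖x0h - v‖ ^ 2)
            = (∑ k, ⟪yh k, x0h - v⟫) + ∑ k, ρ k / 2 * ‖x0h - v‖ ^ 2 :=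
          Finset.sum_add_distrib
        rw [e5, e6, e7]
      have hsσ : ∑ k, ρ k / 2 * ‖x0h - v‖ ^ 2 = σ / 2 * ‖x0h - v‖ ^ 2 := by
        rw [hσ, Finset.sum_div, Finset.sum_mul]
      rw [hsum1, hsum2, hsσ] at hineq
      linarith
    refine ⟨?_, ⟨hx0hX, ?_⟩, hcons⟩
    · intro k
      rw [hyh k]
      simp
    · intro w hw
      have hlz : ∑ k, ⟪yh k, xh k - x0h⟫ = 0 := by
        rw [Finset.sum_eq_zero]
        intro k _
        rw [hcons k, sub_self, inner_zero_right]
      have hrw : ∑ k, ⟪yh k, xh k - w⟫ = ∑ k, ⟪yh k, x0h - w⟫ :=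
        Finset.sum_congr rfl fun k _ => by rw [hcons k]
      rw [hlz, hrw, add_zero]
      apply le_of_forall_Ioo (d := σ / 2 * ‖x0h - w‖ ^ 2)
      intro a ha
      have hvX : (1 - a) • x0h + a • w ∈ X :=
        hXcv hx0hX hw (by linarith [ha.2]) ha.1.le (by ring)
      have hk2 := hkey _ hvX
      have hsub : x0h - ((1 - a) • x0h + a • w) = a • (x0h - w) := by
        rw [sub_smul, one_smul, smul_sub]
        abel
      have hin : ∑ k, ⟪yh k, x0h - ((1 - a) • x0h + a • w)⟫
          = a * ∑ k, ⟪yh k, x0h - w⟫ := by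
        rw [Finset.mul_sum]
        refine Finset.sum_congr rfl fun k _ => ?_
        rw [hsub, real_inner_smul_right]
      have hnv : ‖x0h - ((1 - a) • x0h + a • w)‖ ^ 2 = a ^ 2 * ‖x0h - w‖ ^ 2 := by
        rw [hsub, norm_smul, Real.norm_eq_abs, abs_of_nonneg ha.1.le, mul_pow]
      rw [hin, hnv] at hk2
      have hcv : h ((1 - a) • x0h + a • w) ≤ (1 - a) * h x0h + a * h w := by
        have := hconv.2 (Set.mem_univ x0h) (Set.mem_univ w)
          (by linarith [ha.2] : (0:ℝ) ≤ 1 - a) ha.1.le (by ring)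
        simpa [smul_eq_mul] using this
      nlinarith [hk2, hcv, ha.1, ha.2]
  obtain ⟨a, _, φ, hφ, hφconv⟩ :=
    tendsto_subseq_of_bounded hbound (fun t : ℕ => Set.mem_range_self t)
  have haZ := hstat φ hφ.tendsto_atTop a hφconv
  refine ⟨⟨a, haZ⟩, hbound, ?_⟩
  apply tendsto_of_subseq_tendsto
  intro ns hns
  obtain ⟨b, _, ψ, hψ, hψconv⟩ :=
    tendsto_subseq_of_bounded hbound (fun j : ℕ => (Set.mem_range_self (ns j) :
      (x (ns j), x0 (ns j), y (ns j)) ∈ Set.range fun t : ℕ => (x t, x0 t, y t)))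
  have hbZ := hstat (ns ∘ ψ) (hns.comp hψ.tendsto_atTop) b hψconv
  refine ⟨ψ, ?_⟩
  have hd0 : Tendsto (fun j => dist ((x (ns (ψ j)), x0 (ns (ψ j)), y (ns (ψ j)))) b)
      atTop (nhds 0) := by
    rw [← tendsto_iff_dist_tendsto_zero]
    exact hψconv
  have hmem : b ∈ {z : (Fin K → EuclideanSpace ℝ (Fin N)) × EuclideanSpace ℝ (Fin N)
      × (Fin K → EuclideanSpace ℝ (Fin N)) |
      (∀ k : Fin K, g' k (z.1 k) + z.2.2 k = 0) ∧
      (z.2.1 ∈ X ∧ ∀ w ∈ X,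
        h z.2.1 + ∑ k, ⟪z.2.2 k, z.1 k - z.2.1⟫ ≤ h w + ∑ k, ⟪z.2.2 k, z.1 k - w⟫) ∧
      (∀ k : Fin K, z.1 k = z.2.1)} := hbZ
  exact squeeze_zero (fun j => Metric.infDist_nonneg)
    (fun j => Metric.infDist_le_dist_of_mem hmem) hd0
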